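/- Let g be a C^{n+1} function on [1,2] such that the C^n norm of g' is at most β and such that max_{1≤k≤n} min_{x∈[1,2]} |g^{(k)}(x)| = σ > 0. Then for every ρ > 0 the Lebesgue measure of {x ∈ [1,2] : |g(x)| ≤ ρ} is at most C_n (β σ^{−1} + 1)(ρ σ^{−1})^{1/n}, where C_n depends only on n. -/

import Mathlib

open Set Real MeasureTheory

private lemma vol_le_of_gap {s : Set ℝ} {L : ℝ} (hL : 0 ≤ L)
    (h : ∀ x ∈ s, ∀ y ∈ s, x < y → y - x ≤ L) :
    volume s ≤ ENNReal.ofReal L := by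
  refine (Real.volume_le_diam s).trans (EMetric.diam_le ?_)
  intro x hx y hy
  rw [edist_dist, Real.dist_eq]
  refine ENNReal.ofReal_le_ofReal ?_
  rw [abs_sub_le_iff]
  constructor
  · rcases lt_or_ge y x with hyx | hyx
    · exact h y hy x hx hyx
    · linarith
  · rcases lt_or_ge x y with hxy | hxy
    · exact h x hx y hy hxy
    · linarith

private lemma gap_bound {f f' : ℝ → ℝ} {x y σ M : ℝ} (hσ : 0 < σ) (hxy : x < y)
    (hd : ∀ z ∈ Icc x y, HasDerivAt f (f' z) z)
    (hlow : ∀ z ∈ Ioo x y, σ ≤ |f' z|)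
    (hM : |f y - f x| ≤ M) : y - x ≤ M / σ := by
  obtain ⟨c, hc, hceq⟩ := exists_hasDerivAt_eq_slope f f' hxy
    (fun z hz => (hd z hz).continuousAt.continuousWithinAt)
    (fun z hz => hd z (Ioo_subset_Icc_self hz))
  have h1 : σ ≤ |f y - f x| / (y - x) := by
    have h2 := hlow c hc
    rw [hceq, abs_div, abs_of_pos (by linarith : (0:ℝ) < y - x)] at h2
    exact h2
  have h3 : σ * (y - x) ≤ |f y - f x| := (le_div_iff₀ (by linarith)).mp h1
  rw [le_div_iff₀ hσ]
  nlinarith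

private lemma core : ∀ k : ℕ, 1 ≤ k → ∃ C : ℝ, 0 < C ∧
    ∀ j : ℕ, 1 ≤ j → j ≤ k → ∀ (g : ℝ → ℝ) (a b σ ρ : ℝ), 0 < σ → 0 < ρ →
      (1:ℝ) ≤ a → b ≤ 2 →
      (∀ i, i < j → ∀ x ∈ Ioo (1:ℝ) 2,
        HasDerivAt (iteratedDeriv i g) (iteratedDeriv (i+1) g x) x) →
      (∀ x ∈ Ioo a b, σ ≤ |iteratedDeriv j g x|) →
      volume {x ∈ Ioo a b | |g x| ≤ ρ}
        ≤ ENNReal.ofReal (C * (ρ / σ) ^ ((1:ℝ) / (j:ℝ))) := by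
  refine Nat.le_induction ?_ ?_
  · -- base case k = 1
    refine ⟨2, by norm_num, ?_⟩
    intro j hj1 hj2 g a b σ ρ hσ hρ ha hb hderiv hlow
    have hj : j = 1 := le_antisymm hj2 hj1
    subst hj
    have hsub : Ioo a b ⊆ Ioo (1:ℝ) 2 := Ioo_subset_Ioo ha hb
    have hbound : volume {x ∈ Ioo a b | |g x| ≤ ρ} ≤ ENNReal.ofReal (2 * ρ / σ) := by
      refine vol_le_of_gap (by positivity) ?_
      rintro x ⟨hxab, hgx⟩ y ⟨hyab, hgy⟩ hxy
      have h := gap_bound (f := g) (f' := iteratedDeriv 1 g) hσ hxy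
        (fun z hz => by
          have hz2 : z ∈ Ioo (1:ℝ) 2 :=
            ⟨by rcases hz with ⟨h1', h2'⟩; rcases hxab with ⟨h3', h4'⟩; linarith,
             by rcases hz with ⟨h1', h2'⟩; rcases hyab with ⟨h3', h4'⟩; linarith⟩
          have := hderiv 0 (by norm_num) z hz2
          rwa [iteratedDeriv_zero] at this)
        (fun z hz => hlow z ⟨lt_trans hxab.1 hz.1, lt_trans hz.2 hyab.2⟩)
        (by
          have := abs_sub (g y) (g x)
          calc |g y - g x| ≤ |g y| + |g x| := abs_sub _ _
            _ ≤ 2 * ρ := by linarith)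
      linarith [h, (by ring : 2 * ρ / σ = 2 * ρ / σ)]
    refine hbound.trans (ENNReal.ofReal_le_ofReal ?_)
    rw [Nat.cast_one, div_one, Real.rpow_one]
    rw [mul_div_assoc]
  · -- inductive step
    rintro k hk1 ⟨C, hC, hIH⟩
    refine ⟨2 + 2 * C, by linarith, ?_⟩
    intro j hj1 hj2 g a b σ ρ hσ hρ ha hb hderiv hlow
    have hρσ : 0 < ρ / σ := div_pos hρ hσ
    rcases lt_or_eq_of_le hj2 with hjk | hjk
    · -- j ≤ k : use IH and enlarge constant
      have h := hIH j hj1 (by omega) g a b σ ρ hσ hρ ha hb hderiv hlow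
      refine h.trans (ENNReal.ofReal_le_ofReal ?_)
      have := Real.rpow_nonneg hρσ.le ((1:ℝ)/(j:ℝ))
      nlinarith
    · -- j = k + 1 : main argument
      subst hjk
      set s : ℝ := ρ / σ with hs_def
      set δ : ℝ := s ^ ((1:ℝ) / ((k:ℝ) + 1)) with hδ_def
      have hδ : 0 < δ := Real.rpow_pos_of_pos hρσ _
      have hkR : (1:ℝ) ≤ (k:ℝ) := by exact_mod_cast hk1
      -- key rpow computation
      have hkey : (ρ / (σ * δ)) ^ ((1:ℝ) / (k:ℝ)) = δ := by
        have h1 : ρ / (σ * δ) = s / δ := by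
          rw [hs_def]
          field_simp
        have h2 : s / δ = s ^ ((1:ℝ) - (1:ℝ)/((k:ℝ)+1)) := by
          rw [Real.rpow_sub hρσ, Real.rpow_one, hδ_def]
        rw [h1, h2, ← Real.rpow_mul hρσ.le]
        rw [hδ_def]
        congr 1
        have hk0 : (k:ℝ) ≠ 0 := by linarith
        field_simp
        ring
      -- setup
      have hσδ : 0 < σ * δ := mul_pos hσ hδ
      have hderiv' : ∀ i, i < k → ∀ x ∈ Ioo (1:ℝ) 2,
          HasDerivAt (iteratedDeriv i g) (iteratedDeriv (i+1) g x) x :=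
        fun i hi => hderiv i (by omega)
      set K : Set ℝ := {x ∈ Ioo a b | |iteratedDeriv k g x| < σ * δ} with hK_def
      have hKgap : ∀ x ∈ K, ∀ y ∈ K, x < y → y - x ≤ 2 * δ := by
        rintro x ⟨hxab, hgx⟩ y ⟨hyab, hgy⟩ hxy
        have h := gap_bound (f := iteratedDeriv k g) (f' := iteratedDeriv (k+1) g) hσ hxy
          (fun z hz => by
            refine hderiv k (by omega) z ⟨?_, ?_⟩
            · rcases hz with ⟨h1', h2'⟩; rcases hxab with ⟨h3', h4'⟩; linarith
            · rcases hz with ⟨h1', h2'⟩; rcases hyab with ⟨h3', h4'⟩; linarith)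
          (fun z hz => hlow z ⟨lt_trans hxab.1 hz.1, lt_trans hz.2 hyab.2⟩)
          (calc |iteratedDeriv k g y - iteratedDeriv k g x|
              ≤ |iteratedDeriv k g y| + |iteratedDeriv k g x| := abs_sub _ _
            _ ≤ 2 * (σ * δ) := by linarith)
        have heq : 2 * (σ * δ) / σ = 2 * δ := by field_simp
        linarith
      -- rewrite the goal exponent
      rw [show (((k+1:ℕ)):ℝ) = (k:ℝ) + 1 from by push_cast; ring, ← hδ_def]
      by_cases hK : K.Nonempty
      · obtain ⟨x₀, hx₀⟩ := hK
        have hbb : BddBelow K := ⟨a, fun x hx => le_of_lt hx.1.1⟩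
        have hba : BddAbove K := ⟨b, fun x hx => le_of_lt hx.1.2⟩
        set c := sInf K with hc_def
        set d := sSup K with hd_def
        have hac : a ≤ c := le_csInf ⟨x₀, hx₀⟩ fun x hx => le_of_lt hx.1.1
        have hcx₀ : c ≤ x₀ := csInf_le hbb hx₀
        have hx₀d : x₀ ≤ d := le_csSup hba hx₀
        have hdb : d ≤ b := csSup_le ⟨x₀, hx₀⟩ fun x hx => le_of_lt hx.1.2
        have hx₀b : x₀ < b := hx₀.1.2
        have hax₀ : a < x₀ := hx₀.1.1
        have hdc : d - c ≤ 2 * δ := by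
          have hle : d ≤ c + 2 * δ := csSup_le ⟨x₀, hx₀⟩ fun y hy => by
            have h1 : y - 2*δ ≤ c := le_csInf ⟨x₀, hx₀⟩ fun x hx => by
              rcases lt_or_ge x y with hxy | hxy
              · linarith [hKgap x hx y hy hxy]
              · linarith
            linarith
          linarith
        have hlow1 : ∀ x ∈ Ioo a c, σ * δ ≤ |iteratedDeriv k g x| := by
          intro x hx
          have hxab : x ∈ Ioo a b := ⟨hx.1, by linarith [hx.2]⟩
          by_contra hcon
          exact absurd (csInf_le hbb ⟨hxab, by linarith⟩) (not_le.mpr hx.2)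
        have hlow2 : ∀ x ∈ Ioo d b, σ * δ ≤ |iteratedDeriv k g x| := by
          intro x hx
          have hxab : x ∈ Ioo a b := ⟨by linarith [hx.1], hx.2⟩
          by_contra hcon
          exact absurd (le_csSup hba ⟨hxab, by linarith⟩) (not_le.mpr hx.1)
        have h1 := hIH k hk1 le_rfl g a c (σ*δ) ρ hσδ hρ ha (by linarith) hderiv' hlow1
        have h2 := hIH k hk1 le_rfl g d b (σ*δ) ρ hσδ hρ (by linarith) hb hderiv' hlow2
        rw [hkey] at h1 h2
        have hcover : {x ∈ Ioo a b | |g x| ≤ ρ} ⊆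
            ({x ∈ Ioo a c | |g x| ≤ ρ} ∪ Icc c d) ∪ {x ∈ Ioo d b | |g x| ≤ ρ} := by
          rintro x ⟨hxab, hgx⟩
          rcases lt_or_ge x c with h | h
          · exact Or.inl (Or.inl ⟨⟨hxab.1, h⟩, hgx⟩)
          · rcases le_or_gt x d with h' | h'
            · exact Or.inl (Or.inr ⟨h, h'⟩)
            · exact Or.inr ⟨⟨h', hxab.2⟩, hgx⟩
        have hIcc : volume (Icc c d) ≤ ENNReal.ofReal (2 * δ) := by
          rw [Real.volume_Icc]
          exact ENNReal.ofReal_le_ofReal hdc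
        calc volume {x ∈ Ioo a b | |g x| ≤ ρ}
            ≤ volume (({x ∈ Ioo a c | |g x| ≤ ρ} ∪ Icc c d) ∪ {x ∈ Ioo d b | |g x| ≤ ρ}) :=
              measure_mono hcover
          _ ≤ (volume {x ∈ Ioo a c | |g x| ≤ ρ} + volume (Icc c d))
                + volume {x ∈ Ioo d b | |g x| ≤ ρ} :=
              le_trans (measure_union_le _ _) (add_le_add_left (measure_union_le _ _) _)
          _ ≤ (ENNReal.ofReal (C * δ) + ENNReal.ofReal (2 * δ)) + ENNReal.ofReal (C * δ) :=
              add_le_add (add_le_add h1 hIcc) h2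
          _ = ENNReal.ofReal (C * δ + 2 * δ + C * δ) := by
              rw [← ENNReal.ofReal_add (by positivity) (by positivity),
                ← ENNReal.ofReal_add (by positivity) (by positivity)]
          _ ≤ ENNReal.ofReal ((2 + 2 * C) * δ) :=
              ENNReal.ofReal_le_ofReal (by nlinarith)
      · have hlow' : ∀ x ∈ Ioo a b, σ * δ ≤ |iteratedDeriv k g x| := by
          intro x hx
          by_contra hcon
          exact hK ⟨x, hx, by linarith⟩
        have h := hIH k hk1 le_rfl g a b (σ*δ) ρ hσδ hρ ha hb hderiv' hlow'
        rw [hkey] at h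
        refine h.trans (ENNReal.ofReal_le_ofReal ?_)
        nlinarith

private lemma chain {n : ℕ} {g : ℝ → ℝ} (hg : ContDiffOn ℝ (n + 1) g (Set.Icc 1 2))
    {j : ℕ} (hj : j ≤ n) {x : ℝ} (hx : x ∈ Ioo (1:ℝ) 2) :
    HasDerivAt (iteratedDeriv j g) (iteratedDeriv (j + 1) g x) x := by
  have hs : IsOpen (Ioo (1:ℝ) 2) := isOpen_Ioo
  have hg' : ContDiffOn ℝ (n + 1) g (Ioo 1 2) := hg.mono Ioo_subset_Icc_self
  have hdiff : DifferentiableOn ℝ (iteratedDerivWithin j g (Ioo 1 2)) (Ioo 1 2) :=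
    hg'.differentiableOn_iteratedDerivWithin (by exact_mod_cast Nat.lt_succ_of_le hj)
      hs.uniqueDiffOn
  have heq : Set.EqOn (iteratedDerivWithin j g (Ioo 1 2)) (iteratedDeriv j g) (Ioo 1 2) := by
    intro y hy
    rw [iteratedDerivWithin_eq_iteratedFDerivWithin, iteratedDeriv_eq_iteratedFDeriv,
      iteratedFDerivWithin_of_isOpen j hs hy]
  have hda : DifferentiableAt ℝ (iteratedDeriv j g) x := by
    have h1 : DifferentiableAt ℝ (iteratedDerivWithin j g (Ioo 1 2)) x :=
      (hdiff x hx).differentiableAt (hs.mem_nhds hx)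
    exact h1.congr_of_eventuallyEq ((heq.eventuallyEq_of_mem (hs.mem_nhds hx)).symm)
  have h := hda.hasDerivAt
  rwa [iteratedDeriv_succ]

/-- Sublevel-set measure estimate for C^{n+1} functions on [1,2]: if the C^n norm
of g' is at most β and some derivative g^{(k)}, 1 ≤ k ≤ n, satisfies |g^{(k)}| ≥ σ > 0
on [1,2], then meas{x ∈ [1,2] : |g x| ≤ ρ} ≤ C_n (βσ⁻¹ + 1)(ρσ⁻¹)^{1/n}. -/
theorem stmt8 (n : ℕ) (hn : 1 ≤ n) :
    ∃ C : ℝ, 0 < C ∧ ∀ (g : ℝ → ℝ) (β σ ρ : ℝ),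
      ContDiffOn ℝ (n + 1) g (Set.Icc 1 2) →
      (∀ k ≤ n, ∀ x ∈ Set.Icc (1:ℝ) 2, |iteratedDeriv (k + 1) g x| ≤ β) →
      0 < σ →
      (∃ k, 1 ≤ k ∧ k ≤ n ∧ ∀ x ∈ Set.Icc (1:ℝ) 2, σ ≤ |iteratedDeriv k g x|) →
      0 < ρ →
      volume {x ∈ Set.Icc (1:ℝ) 2 | |g x| ≤ ρ}
        ≤ ENNReal.ofReal (C * (β * σ⁻¹ + 1) * (ρ * σ⁻¹) ^ ((1:ℝ) / n)) := by
  obtain ⟨C, hC, hcore⟩ := core n hn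
  refine ⟨C + 1, by linarith, ?_⟩
  rintro g β σ ρ hg hβ hσ ⟨k, hk1, hkn, hσk⟩ hρ
  have hone : (1:ℝ) ∈ Set.Icc (1:ℝ) 2 := ⟨le_refl _, by norm_num⟩
  have hβ0 : 0 ≤ β := le_trans (abs_nonneg _) (hβ 0 (Nat.zero_le n) 1 hone)
  have hfac : 1 ≤ β * σ⁻¹ + 1 := by
    have : 0 ≤ β * σ⁻¹ := mul_nonneg hβ0 (inv_nonneg.mpr hσ.le)
    linarith
  have ht : 0 < ρ * σ⁻¹ := mul_pos hρ (inv_pos.mpr hσ)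
  have hnR : (1:ℝ) ≤ (n:ℝ) := by exact_mod_cast hn
  have hkR : (1:ℝ) ≤ (k:ℝ) := by exact_mod_cast hk1
  have hexp_nonneg : (0:ℝ) ≤ (1:ℝ) / (n:ℝ) := by positivity
  have hu : (0:ℝ) ≤ (ρ * σ⁻¹) ^ ((1:ℝ) / (n:ℝ)) := Real.rpow_nonneg ht.le _
  -- reduce to the open interval
  have hnull : volume {x ∈ Set.Icc (1:ℝ) 2 | |g x| ≤ ρ}
      ≤ volume {x ∈ Ioo (1:ℝ) 2 | |g x| ≤ ρ} := by
    have hsub : {x ∈ Set.Icc (1:ℝ) 2 | |g x| ≤ ρ}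
        ⊆ {x ∈ Ioo (1:ℝ) 2 | |g x| ≤ ρ} ∪ ({1, 2} : Set ℝ) := by
      rintro x ⟨⟨hx1, hx2⟩, hgx⟩
      rcases eq_or_lt_of_le hx1 with h1 | h1
      · exact Or.inr (Or.inl h1.symm)
      · rcases eq_or_lt_of_le hx2 with h2 | h2
        · exact Or.inr (Or.inr h2)
        · exact Or.inl ⟨⟨h1, h2⟩, hgx⟩
    calc volume {x ∈ Set.Icc (1:ℝ) 2 | |g x| ≤ ρ}
        ≤ volume ({x ∈ Ioo (1:ℝ) 2 | |g x| ≤ ρ}) + volume ({1, 2} : Set ℝ) :=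
          le_trans (measure_mono hsub) (measure_union_le _ _)
      _ = volume {x ∈ Ioo (1:ℝ) 2 | |g x| ≤ ρ} := by
          have hz : volume ({1, 2} : Set ℝ) = 0 := by
            rw [Set.insert_eq]
            exact measure_union_null (measure_singleton _) (measure_singleton _)
          rw [hz, add_zero]
  rcases le_or_gt (ρ / σ) 1 with hcase | hcase
  · -- small ρ/σ : use the core lemma
    have hd : ∀ i, i < k → ∀ x ∈ Ioo (1:ℝ) 2,
        HasDerivAt (iteratedDeriv i g) (iteratedDeriv (i+1) g x) x :=
      fun i hi x hx => chain hg (by omega) hx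
    have h := hcore k hk1 hkn g 1 2 σ ρ hσ hρ le_rfl le_rfl hd
      (fun x hx => hσk x (Ioo_subset_Icc_self hx))
    refine (hnull.trans h).trans (ENNReal.ofReal_le_ofReal ?_)
    rw [div_eq_mul_inv] at hcase h ⊢
    have hexp : (ρ * σ⁻¹) ^ ((1:ℝ) / (k:ℝ)) ≤ (ρ * σ⁻¹) ^ ((1:ℝ) / (n:ℝ)) := by
      apply Real.rpow_le_rpow_of_exponent_ge ht hcase
      exact one_div_le_one_div_of_le (by linarith) (by exact_mod_cast hkn)
    have hk_nonneg : (0:ℝ) ≤ (ρ * σ⁻¹) ^ ((1:ℝ) / (k:ℝ)) := Real.rpow_nonneg ht.le _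
    nlinarith [mul_le_mul_of_nonneg_left hexp hC.le,
      mul_nonneg (mul_nonneg (by linarith : (0:ℝ) ≤ C + 1)
        (by linarith : (0:ℝ) ≤ β * σ⁻¹ + 1 - 1)) hu]
  · -- large ρ/σ : trivial bound by the measure of [1,2]
    have h1 : volume {x ∈ Set.Icc (1:ℝ) 2 | |g x| ≤ ρ} ≤ ENNReal.ofReal 1 := by
      calc volume {x ∈ Set.Icc (1:ℝ) 2 | |g x| ≤ ρ} ≤ volume (Set.Icc (1:ℝ) 2) :=
            measure_mono (sep_subset _ _)
        _ = ENNReal.ofReal 1 := by rw [Real.volume_Icc]; norm_num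
    refine h1.trans (ENNReal.ofReal_le_ofReal ?_)
    rw [lt_div_iff₀ hσ, one_mul] at hcase
    have ht1 : (1:ℝ) ≤ ρ * σ⁻¹ := by
      rw [← div_eq_mul_inv, le_div_iff₀ hσ, one_mul]
      exact hcase.le
    have hu1 : (1:ℝ) ≤ (ρ * σ⁻¹) ^ ((1:ℝ) / (n:ℝ)) := by
      calc (1:ℝ) = (1:ℝ) ^ ((1:ℝ)/(n:ℝ)) := (Real.one_rpow _).symm
        _ ≤ (ρ * σ⁻¹) ^ ((1:ℝ)/(n:ℝ)) := Real.rpow_le_rpow (by norm_num) ht1 hexp_nonneg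
    have hfu : (1:ℝ) ≤ (β * σ⁻¹ + 1) * (ρ * σ⁻¹) ^ ((1:ℝ)/(n:ℝ)) := by
      nlinarith
    nlinarith [mul_le_mul_of_nonneg_left hfu (by linarith : (0:ℝ) ≤ C + 1)]
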